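/- (Probabilistic entailment verification for the Or rule.) Let α₃ ∈ (0,1] and α₁ ∈ [α₃, 1] be real numbers, and set α₂ = α₁·α₃/(α₁·(1 + α₃) - α₃) (the denominator is positive since α₁ ≥ α₃ > 0). Let P be a probability measure and A, B, C measurable events with P(A) > 0 and P(B) > 0. If P(C|A) ≥ α₁ and P(C|B) ≥ α₂, then P(C | A ∪ B) ≥ α₃. -/

import Mathlib

open MeasureTheory

/-- Conditional probability `P(E|H) = P(E ∩ H) / P(H)` as a real number. -/
noncomputable def condProb {Ω : Type*} [MeasurableSpace Ω] (P : Measure Ω) (E H : Set Ω) : ℝ :=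
  (P (E ∩ H)).toReal / (P H).toReal

/-- Probabilistic entailment verification for the Or rule. -/
theorem or_rule_entailment (α₃ α₁ : ℝ)
    (hα₃ : α₃ ∈ Set.Ioc (0 : ℝ) 1) (hα₁ : α₁ ∈ Set.Icc α₃ 1)
    {Ω : Type*} [MeasurableSpace Ω] (P : Measure Ω) [IsProbabilityMeasure P]
    (A B C : Set Ω)
    (hA : MeasurableSet A) (hB : MeasurableSet B) (hC : MeasurableSet C)
    (hPA : 0 < P A) (hPB : 0 < P B)
    (h1 : condProb P C A ≥ α₁)
    (h2 : condProb P C B ≥ α₁ * α₃ / (α₁ * (1 + α₃) - α₃)) :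
    condProb P C (A ∪ B) ≥ α₃ := by
  obtain ⟨hα₃0, hα₃1⟩ := hα₃
  obtain ⟨hα₁l, hα₁u⟩ := hα₁
  have hα₁0 : (0:ℝ) < α₁ := lt_of_lt_of_le hα₃0 hα₁l
  set pu := (P A).toReal with hpu
  set pv := (P B).toReal with hpv
  set pw := (P (A ∩ B)).toReal with hpw
  set pD := (P (A ∪ B)).toReal with hpD
  set x := (P (C ∩ A)).toReal with hx
  set y := (P (C ∩ B)).toReal with hy
  set N := (P (C ∩ (A ∪ B))).toReal with hN
  have hu : 0 < pu := ENNReal.toReal_pos hPA.ne' (measure_ne_top P A)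
  have hv : 0 < pv := ENNReal.toReal_pos hPB.ne' (measure_ne_top P B)
  have hwnn : 0 ≤ pw := ENNReal.toReal_nonneg
  -- pD = pu + pv - pw
  have hunion : P (A ∪ B) + P (A ∩ B) = P A + P B := measure_union_add_inter A hB
  have hDsum : pD + pw = pu + pv := by
    rw [hpD, hpw, hpu, hpv, ← ENNReal.toReal_add (measure_ne_top _ _) (measure_ne_top _ _),
      ← ENNReal.toReal_add (measure_ne_top _ _) (measure_ne_top _ _), hunion]
  -- N ≥ x, N ≥ y
  have hN1 : x ≤ N := ENNReal.toReal_mono (measure_ne_top _ _)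
    (measure_mono (Set.inter_subset_inter_right C Set.subset_union_left))
  have hN2 : y ≤ N := ENNReal.toReal_mono (measure_ne_top _ _)
    (measure_mono (Set.inter_subset_inter_right C Set.subset_union_right))
  -- x + y ≤ N + pw
  have hN3 : x + y ≤ N + pw := by
    have e1 : P (C ∩ A ∪ C ∩ B) + P (C ∩ A ∩ (C ∩ B)) = P (C ∩ A) + P (C ∩ B) :=
      measure_union_add_inter _ (hC.inter hB)
    have e2 : C ∩ A ∪ C ∩ B = C ∩ (A ∪ B) := (Set.inter_union_distrib_left C A B).symm
    have e3 : P (C ∩ A ∩ (C ∩ B)) ≤ P (A ∩ B) :=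
      measure_mono (by intro z hz; exact ⟨hz.1.2, hz.2.2⟩)
    have e4 : P (C ∩ A) + P (C ∩ B) ≤ P (C ∩ (A ∪ B)) + P (A ∩ B) := by
      rw [← e1, e2]; exact add_le_add_right e3 _
    have := ENNReal.toReal_mono (by finiteness) e4
    rwa [ENNReal.toReal_add (measure_ne_top _ _) (measure_ne_top _ _),
      ENNReal.toReal_add (measure_ne_top _ _) (measure_ne_top _ _)] at this
  -- hypotheses as linear inequalities
  have h1' : α₁ * pu ≤ x := by
    have := h1
    rw [condProb] at this
    exact (le_div_iff₀ hu).mp this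
  have hd : 0 < α₁ * (1 + α₃) - α₃ := by nlinarith
  have h2' : α₁ * α₃ * pv ≤ (α₁ * (1 + α₃) - α₃) * y := by
    have := h2
    rw [condProb, ge_iff_le, div_le_div_iff₀ hd hv] at this
    linarith
  have hDpos : 0 < pD := by
    have : pu ≤ pD := ENNReal.toReal_mono (measure_ne_top _ _)
      (measure_mono Set.subset_union_left)
    linarith
  rw [condProb, ge_iff_le, le_div_iff₀ hDpos]
  -- combine: α₁ * N ≥ α₃*α₁*(x+y-pw) + α₃*(1-α₁)*x + (α₁-α₃)*y ≥ α₁*α₃*pD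
  nlinarith [mul_le_mul_of_nonneg_left hN3 (mul_nonneg hα₃0.le hα₁0.le),
    mul_le_mul_of_nonneg_left hN1 (mul_nonneg hα₃0.le (by linarith : (0:ℝ) ≤ 1 - α₁)),
    mul_le_mul_of_nonneg_left hN2 (by linarith : (0:ℝ) ≤ α₁ - α₃),
    mul_le_mul_of_nonneg_left h1' hα₃0.le,
    mul_pos hα₁0 hDpos, hDsum]
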